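/- Let G=(V,E) be a finite simple graph, ω: E → ℚ an edge-weight function, and let χ, χ': V → {1,…,c} be c-colorings of G. Let S' := D_flip(χ,χ') and let 𝒞 be the set of connected components of the induced subgraph G[S']. For each C ∈ 𝒞, let E⁺_C := (E(C,V) ∩ E(χ')) \ E(χ) and E⁻_C := (E(C,V) ∩ E(χ)) \ E(χ'), where E(C,V) is the set of edges of G with at least one endpoint in C. Then ω(E(χ')) − ω(E(χ)) = Σ_{C ∈ 𝒞} (ω(E⁺_C) − ω(E⁻_C)). -/
import Mathlib

open Finset
open scoped Classical

/-- The finset of properly colored edges of `G` under the coloring `χ`. -/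
noncomputable def properEdges {V : Type*} [Fintype V] {α : Type*}
    (G : SimpleGraph V) (χ : V → α) : Finset (Sym2 V) :=
  G.edgeFinset.filter fun e => ¬ (Sym2.map χ e).IsDiag

/-- The flip between two colorings: the set of vertices where they differ. -/
noncomputable def flipSet {V : Type*} [Fintype V] {α : Type*}
    (χ χ' : V → α) : Finset V :=
  univ.filter fun v => χ v ≠ χ' v

/-- The set of connected components of the subgraph of `G` induced by `S`,
as a finset of connected components of `G.induce S`. -/
noncomputable def componentsOf {V : Type*} [Fintype V] (G : SimpleGraph V)
    (S : Finset V) : Finset ((G.induce (↑S : Set V)).ConnectedComponent) :=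
  (Finset.univ : Finset (↑S : Set V)).image
    (G.induce (↑S : Set V)).connectedComponentMk

/-- The vertex set (as a finset of vertices of `G`) of a connected component
of the subgraph of `G` induced by `S`. -/
noncomputable def compVerts {V : Type*} [Fintype V] (G : SimpleGraph V)
    (S : Finset V) (C : (G.induce (↑S : Set V)).ConnectedComponent) : Finset V :=
  S.filter fun x =>
    ∃ h : x ∈ (↑S : Set V), (G.induce (↑S : Set V)).connectedComponentMk ⟨x, h⟩ = C

/-- The edges of `G` with at least one endpoint in `A`. -/
noncomputable def edgesTouching {V : Type*} [Fintype V] (G : SimpleGraph V)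
    (A : Finset V) : Finset (Sym2 V) :=
  G.edgeFinset.filter fun e => ∃ x ∈ e, x ∈ A

section aux
variable {V : Type*} [Fintype V] (G : SimpleGraph V) (S : Finset V)

lemma compVerts_unique {C C' : (G.induce (↑S : Set V)).ConnectedComponent}
    {x : V} (hx : x ∈ compVerts G S C) (hx' : x ∈ compVerts G S C') : C = C' := by
  simp only [compVerts, mem_filter] at hx hx'
  obtain ⟨_, h, rfl⟩ := hx
  obtain ⟨_, h', e⟩ := hx'
  exact e

lemma mem_compVerts_of_adj {C : (G.induce (↑S : Set V)).ConnectedComponent}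
    {x y : V} (hx : x ∈ compVerts G S C) (hy : y ∈ S) (hadj : G.Adj x y) :
    y ∈ compVerts G S C := by
  simp only [compVerts, mem_filter] at hx ⊢
  obtain ⟨hxS, h, rfl⟩ := hx
  refine ⟨hy, by exact_mod_cast hy, ?_⟩
  exact SimpleGraph.ConnectedComponent.connectedComponentMk_eq_of_adj
    (by exact hadj.symm : (G.induce (↑S : Set V)).Adj ⟨y, by exact_mod_cast hy⟩ ⟨x, h⟩)

/-- An edge of `G` touches at most one component's vertex set. -/
lemma touch_unique {C C' : (G.induce (↑S : Set V)).ConnectedComponent}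
    {e : Sym2 V} (he : e ∈ G.edgeFinset)
    (h1 : ∃ x ∈ e, x ∈ compVerts G S C) (h2 : ∃ x ∈ e, x ∈ compVerts G S C') :
    C = C' := by
  obtain ⟨x, hxe, hxC⟩ := h1
  obtain ⟨y, hye, hyC⟩ := h2
  by_cases hxy : x = y
  · exact compVerts_unique G S hxC (hxy ▸ hyC)
  · have hadj : G.Adj x y := by
      rw [SimpleGraph.mem_edgeFinset] at he
      have heq := (Sym2.mem_and_mem_iff hxy).mp ⟨hxe, hye⟩
      rw [heq] at he
      exact he
    have hyS : y ∈ S := (mem_filter.mp hyC).1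
    exact compVerts_unique G S (mem_compVerts_of_adj G S hxC hyS hadj) hyC

end aux

theorem improvement_eq_sum_over_components
    {V : Type*} [Fintype V] [DecidableEq V] {c : ℕ}
    (G : SimpleGraph V) (ω : Sym2 V → ℚ) (χ χ' : V → Fin c) :
    (∑ e ∈ properEdges G χ', ω e) - (∑ e ∈ properEdges G χ, ω e) =
      ∑ C ∈ componentsOf G (flipSet χ χ'),
        ((∑ e ∈ (edgesTouching G (compVerts G (flipSet χ χ') C) ∩ properEdges G χ') \
              properEdges G χ, ω e) -
          (∑ e ∈ (edgesTouching G (compVerts G (flipSet χ χ') C) ∩ properEdges G χ) \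
              properEdges G χ', ω e)) := by
  classical
  set S := flipSet χ χ' with hS
  set A := properEdges G χ' with hA
  set B := properEdges G χ with hB
  set 𝒞 := componentsOf G S with h𝒞
  -- every edge in the symmetric difference touches the flip set
  have key : ∀ e ∈ G.edgeFinset, ((e ∈ A ∧ e ∉ B) ∨ (e ∈ B ∧ e ∉ A)) →
      ∃ x ∈ e, x ∈ S := by
    intro e he hd
    induction e using Sym2.ind with
    | _ u v =>
      have hmemA : (s(u, v) ∈ A) ↔ χ' u ≠ χ' v := by
        simp [hA, properEdges, he, Sym2.isDiag_iff_proj_eq]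
      have hmemB : (s(u, v) ∈ B) ↔ χ u ≠ χ v := by
        simp [hB, properEdges, he, Sym2.isDiag_iff_proj_eq]
      by_contra hcon
      push_neg at hcon
      have hu : χ u = χ' u := by
        have := hcon u (Sym2.mem_mk_left u v); simpa [hS, flipSet] using this
      have hv : χ v = χ' v := by
        have := hcon v (Sym2.mem_mk_right u v); simpa [hS, flipSet] using this
      simp only [hmemA, hmemB] at hd
      rw [hu, hv] at hd
      tauto
  have hAE : A ⊆ G.edgeFinset := by
    intro e he; simp only [hA, properEdges, mem_filter] at he; exact he.1
  have hBE : B ⊆ G.edgeFinset := by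
    intro e he; simp only [hB, properEdges, mem_filter] at he; exact he.1
  -- the pieces
  set Tp : (G.induce (↑S : Set V)).ConnectedComponent → Finset (Sym2 V) :=
    fun C => (edgesTouching G (compVerts G S C) ∩ A) \ B with hTp
  set Tm : (G.induce (↑S : Set V)).ConnectedComponent → Finset (Sym2 V) :=
    fun C => (edgesTouching G (compVerts G S C) ∩ B) \ A with hTm
  have cover : ∀ (X Y : Finset (Sym2 V)), X ⊆ G.edgeFinset →
      (∀ C, (edgesTouching G (compVerts G S C) ∩ X) \ Y =
        (edgesTouching G (compVerts G S C) ∩ X) \ Y) →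
      (∀ e, e ∈ X ∧ e ∉ Y → ∃ x ∈ e, x ∈ S) →
      X \ Y = 𝒞.biUnion (fun C => (edgesTouching G (compVerts G S C) ∩ X) \ Y) := by
    intro X Y hXE _ hkey
    ext e
    simp only [mem_biUnion, mem_sdiff, mem_inter]
    constructor
    · rintro ⟨heX, heY⟩
      obtain ⟨x, hxe, hxS⟩ := hkey e ⟨heX, heY⟩
      have hxS' : x ∈ (↑S : Set V) := by exact_mod_cast hxS
      refine ⟨(G.induce (↑S : Set V)).connectedComponentMk ⟨x, hxS'⟩, ?_, ⟨?_, heX⟩, heY⟩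
      · exact mem_image.mpr ⟨⟨x, hxS'⟩, mem_univ _, rfl⟩
      · have hxcv : x ∈ compVerts G S ((G.induce (↑S : Set V)).connectedComponentMk ⟨x, hxS'⟩) := by
          simp only [compVerts, mem_filter]
          exact ⟨hxS, hxS', trivial⟩
        simp only [edgesTouching, mem_filter]
        exact ⟨hXE heX, x, hxe, hxcv⟩
    · rintro ⟨C, _, ⟨⟨_, heX⟩, heY⟩⟩
      exact ⟨heX, heY⟩
  have disj : ∀ (X Y : Finset (Sym2 V)), X ⊆ G.edgeFinset →
      (↑𝒞 : Set _).PairwiseDisjoint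
        (fun C => (edgesTouching G (compVerts G S C) ∩ X) \ Y) := by
    intro X Y hXE C _ C' _ hne
    rw [Function.onFun, Finset.disjoint_left]
    intro e he he'
    apply hne
    have h1 := (mem_inter.mp (mem_sdiff.mp he).1).1
    have h2 := (mem_inter.mp (mem_sdiff.mp he').1).1
    simp only [edgesTouching, mem_filter] at h1 h2
    exact touch_unique G S h1.1 h1.2 h2.2
  have hApart : A \ B = 𝒞.biUnion Tp :=
    cover A B hAE (fun _ => rfl) (fun e h => key e (hAE h.1) (Or.inl h))
  have hBpart : B \ A = 𝒞.biUnion Tm :=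
    cover B A hBE (fun _ => rfl) (fun e h => key e (hBE h.1) (Or.inr h))
  have sumA : ∑ e ∈ A, ω e = ∑ e ∈ A ∩ B, ω e + ∑ e ∈ A \ B, ω e :=
    (Finset.sum_inter_add_sum_sdiff A B ω).symm
  have sumB : ∑ e ∈ B, ω e = ∑ e ∈ A ∩ B, ω e + ∑ e ∈ B \ A, ω e := by
    rw [inter_comm]; exact (Finset.sum_inter_add_sum_sdiff B A ω).symm
  rw [sumA, sumB, hApart, hBpart, Finset.sum_biUnion (disj A B hAE),
    Finset.sum_biUnion (disj B A hBE), Finset.sum_sub_distrib]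
  ring
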